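/- Let I be a finite nonempty index set, V : I → ℝ, and let (ξ_i)_{i∈I} be independent real random variables, each with cumulative distribution function F(x) = exp(−e^{−x}) (standard Gumbel, location 0 and scale 1). Then for every i ∈ I, the probability that V_i + ξ_i ≥ V_j + ξ_j for all j ∈ I equals e^{V_i} / ∑_{j∈I} e^{V_j}. -/

import Mathlib

open MeasureTheory Real Set Filter Topology
open scoped ENNReal

lemma gumbel_hasDerivAt (B : ℝ) (hB : B ≠ 0) (x : ℝ) :
    HasDerivAt (fun x => B⁻¹ * Real.exp (-(B * Real.exp (-x))))
      (Real.exp (-x) * Real.exp (-(B * Real.exp (-x)))) x := by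
  have h1 : HasDerivAt (fun x : ℝ => -x) (-1) x := (hasDerivAt_id x).neg
  have h2 := h1.exp
  have h3 := ((h2.const_mul B).neg).exp.const_mul B⁻¹
  refine h3.congr_deriv ?_
  simp only [Pi.neg_apply]
  field_simp

lemma gumbel_bound (B : ℝ) (hB : 1 ≤ B) (x : ℝ) :
    Real.exp (-x) * Real.exp (-(B * Real.exp (-x))) ≤ 4 * Real.exp x := by
  set t := Real.exp (-x) with ht
  have ht0 : 0 < t := Real.exp_pos _
  have hxt : Real.exp x = t⁻¹ := by
    rw [ht, ← Real.exp_neg, neg_neg]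
  have h1 : Real.exp (-(B * t)) ≤ Real.exp (-t) := by
    apply Real.exp_le_exp.2; nlinarith
  have key : ∀ s : ℝ, 0 < s → s ≤ Real.exp s := fun s _ => by
    nlinarith [Real.add_one_le_exp s]
  have h3 : Real.exp (-(t/2)) ≤ 2/t := by
    rw [Real.exp_neg]
    have h4 : t/2 ≤ Real.exp (t/2) := key _ (by positivity)
    calc (Real.exp (t/2))⁻¹ ≤ (t/2)⁻¹ := by
          apply inv_anti₀ (by positivity) h4
      _ = 2/t := by rw [inv_div]
  have h2 : t * Real.exp (-t) ≤ 2 * Real.exp (-(t/2)) := by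
    have he : Real.exp (-t) = Real.exp (-(t/2)) * Real.exp (-(t/2)) := by
      rw [← Real.exp_add]; ring_nf
    have h4 : t/2 ≤ Real.exp (t/2) := key _ (by positivity)
    have h5 : Real.exp (-(t/2)) * Real.exp (t/2) = 1 := by
      rw [← Real.exp_add]; simp
    rw [he]
    nlinarith [Real.exp_pos (-(t/2)), Real.exp_pos (t/2)]
  calc t * Real.exp (-(B * t)) ≤ t * Real.exp (-t) := by nlinarith
    _ ≤ 2 * Real.exp (-(t/2)) := h2
    _ ≤ 2 * (2/t) := by nlinarith [Real.exp_pos (-(t/2))]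
    _ = 4 * Real.exp x := by rw [hxt]; field_simp; norm_num

lemma gumbel_integrable (B : ℝ) (hB : 1 ≤ B) :
    Integrable (fun x => Real.exp (-x) * Real.exp (-(B * Real.exp (-x)))) := by
  have hB0 : 0 < B := lt_of_lt_of_le one_pos hB
  have hcont : Continuous fun x => Real.exp (-x) * Real.exp (-(B * Real.exp (-x))) := by
    fun_prop
  have hnn : ∀ x, 0 ≤ Real.exp (-x) * Real.exp (-(B * Real.exp (-x))) := fun x => by positivity
  rw [← integrableOn_univ, ← Set.Iic_union_Ioi (a := (0:ℝ))]
  refine IntegrableOn.union ?_ ?_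
  · refine Integrable.mono' ((integrableOn_exp_Iic 0).const_mul 4) hcont.aestronglyMeasurable ?_
    refine Filter.Eventually.of_forall fun x => ?_
    rw [Real.norm_eq_abs, abs_of_nonneg (hnn x)]
    exact gumbel_bound B hB x
  · refine Integrable.mono' (exp_neg_integrableOn_Ioi 0 one_pos) hcont.aestronglyMeasurable ?_
    refine Filter.Eventually.of_forall fun x => ?_
    rw [Real.norm_eq_abs, abs_of_nonneg (hnn x), neg_one_mul]
    have : Real.exp (-(B * Real.exp (-x))) ≤ 1 := by
      rw [Real.exp_le_one_iff]
      have := Real.exp_pos (-x); nlinarith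
    nlinarith [Real.exp_pos (-x), Real.exp_pos (-(B * Real.exp (-x)))]

lemma gumbel_tendsto_atTop (B : ℝ) :
    Tendsto (fun x => B⁻¹ * Real.exp (-(B * Real.exp (-x)))) atTop (𝓝 B⁻¹) := by
  have h : Tendsto (fun x : ℝ => -(B * Real.exp (-x))) atTop (𝓝 0) := by
    have := (Real.tendsto_exp_neg_atTop_nhds_zero.const_mul B).neg
    simpa using this
  have := ((Real.continuous_exp.tendsto 0).comp h).const_mul B⁻¹
  simpa using this

lemma gumbel_tendsto_atBot (B : ℝ) (hB : 0 < B) :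
    Tendsto (fun x => B⁻¹ * Real.exp (-(B * Real.exp (-x)))) atBot (𝓝 0) := by
  have h1 : Tendsto (fun x : ℝ => Real.exp (-x)) atBot atTop :=
    Real.tendsto_exp_atTop.comp tendsto_neg_atBot_atTop
  have h2 : Tendsto (fun x : ℝ => -(B * Real.exp (-x))) atBot atBot :=
    tendsto_neg_atTop_atBot.comp (h1.const_mul_atTop hB)
  have := (Real.tendsto_exp_atBot.comp h2).const_mul B⁻¹
  simpa using this

lemma gumbel_integral (B : ℝ) (hB : 1 ≤ B) :
    ∫ x, Real.exp (-x) * Real.exp (-(B * Real.exp (-x))) = B⁻¹ := by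
  have hB0 : 0 < B := lt_of_lt_of_le one_pos hB
  have := integral_of_hasDerivAt_of_tendsto (fun x => gumbel_hasDerivAt B hB0.ne' x)
    (gumbel_integrable B hB) (gumbel_tendsto_atBot B hB0) (gumbel_tendsto_atTop B)
  simpa using this

lemma gumbel_integral_Iic (B : ℝ) (hB : 1 ≤ B) (x : ℝ) :
    ∫ t in Iic x, Real.exp (-t) * Real.exp (-(B * Real.exp (-t)))
      = B⁻¹ * Real.exp (-(B * Real.exp (-x))) := by
  have hB0 : 0 < B := lt_of_lt_of_le one_pos hB
  have := integral_Iic_of_hasDerivAt_of_tendsto' (a := x)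
    (fun t _ => gumbel_hasDerivAt B hB0.ne' t)
    (gumbel_integrable B hB).integrableOn (gumbel_tendsto_atBot B hB0)
  simpa using this

noncomputable def gumbelMeasure : Measure ℝ :=
  volume.withDensity fun x => ENNReal.ofReal (Real.exp (-x) * Real.exp (-(1 * Real.exp (-x))))

lemma gumbel_density_measurable :
    Measurable fun x : ℝ => ENNReal.ofReal (Real.exp (-x) * Real.exp (-(1 * Real.exp (-x)))) := by
  fun_prop

lemma gumbelMeasure_Iic (x : ℝ) :
    gumbelMeasure (Iic x) = ENNReal.ofReal (Real.exp (-Real.exp (-x))) := by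
  rw [gumbelMeasure, withDensity_apply _ measurableSet_Iic,
    ← ofReal_integral_eq_lintegral_ofReal ((gumbel_integrable 1 le_rfl).restrict)
      (Filter.Eventually.of_forall fun t => by positivity),
    gumbel_integral_Iic 1 le_rfl x]
  norm_num

instance : IsProbabilityMeasure gumbelMeasure := by
  constructor
  rw [gumbelMeasure, withDensity_apply _ MeasurableSet.univ, Measure.restrict_univ,
    ← ofReal_integral_eq_lintegral_ofReal (gumbel_integrable 1 le_rfl)
      (Filter.Eventually.of_forall fun t => by positivity),
    gumbel_integral 1 le_rfl]
  norm_num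

open ProbabilityTheory

lemma gumbelMeasure_def : gumbelMeasure
    = volume.withDensity fun x =>
        ENNReal.ofReal (Real.exp (-x) * Real.exp (-(1 * Real.exp (-x)))) := rfl

lemma pi_map_eval {ι : Type*} [Fintype ι] {α : Type*} [MeasurableSpace α]
    (μ : ι → Measure α) [∀ i, IsProbabilityMeasure (μ i)] (k : ι) :
    (Measure.pi μ).map (Function.eval k) = μ k := by
  classical
  ext s hs
  rw [Measure.map_apply (measurable_pi_apply k) hs]
  have hpre : Function.eval k ⁻¹' s
      = Set.pi Set.univ (Function.update (fun _ : ι => (Set.univ : Set α)) k s) := by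
    ext f
    simp only [Set.mem_preimage, Set.mem_pi, Set.mem_univ, forall_true_left]
    constructor
    · intro hf j
      by_cases hj : j = k
      · subst hj; rwa [Function.update_self]
      · rw [Function.update_of_ne hj]; trivial
    · intro hf
      have := hf k
      rwa [Function.update_self] at this
  rw [hpre, Measure.pi_pi]
  rw [Finset.prod_eq_single k
    (fun j _ hj => by rw [Function.update_of_ne hj]; simp)
    (fun h => absurd (Finset.mem_univ k) h)]
  rw [Function.update_self]

lemma lintegral_pi_eval {ι : Type*} [Fintype ι] (μ : Measure ℝ) [IsProbabilityMeasure μ]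
    (k : ι) (F : ℝ → ℝ≥0∞) (hF : Measurable F) :
    ∫⁻ x : ι → ℝ, F (x k) ∂(Measure.pi fun _ => μ) = ∫⁻ t, F t ∂μ := by
  have h := lintegral_map (μ := Measure.pi fun _ : ι => μ) hF (measurable_pi_apply k)
  rw [pi_map_eval (fun _ : ι => μ) k] at h
  exact h.symm

lemma pi_gumbel_event {I : Type*} [Fintype I] [Nonempty I] (V : I → ℝ) (i : I) :
    Measure.pi (fun _ : I => gumbelMeasure) {f | ∀ j, V j + f j ≤ V i + f i}
      = ENNReal.ofReal (Real.exp (V i) / ∑ j, Real.exp (V j)) := by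
  classical
  set S : Set (I → ℝ) := {f | ∀ j, V j + f j ≤ V i + f i} with hS
  have hSmeas : MeasurableSet S := by
    have : S = ⋂ j, {f : I → ℝ | V j + f j ≤ V i + f i} := by ext f; simp [hS]
    rw [this]
    exact MeasurableSet.iInter fun j => measurableSet_le (by fun_prop) (by fun_prop)
  set A : ℝ := ∑ j : {j // ¬ j = i}, Real.exp (V (j : I) - V i) with hA
  have hA0 : 0 ≤ A := Finset.sum_nonneg fun j _ => (Real.exp_pos _).le
  have MP := measurePreserving_piEquivPiSubtypeProd (fun _ : I => gumbelMeasure)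
    (fun j => j = i)
  set e := MeasurableEquiv.piEquivPiSubtypeProd (fun _ : I => ℝ) (fun j => j = i) with he
  have hT : MeasurableSet (e.symm ⁻¹' S) := hSmeas.preimage e.symm.measurable
  have h0 : S = e ⁻¹' (e.symm ⁻¹' S) := by ext f; simp
  conv_lhs => rw [h0]
  rw [← Measure.map_apply e.measurable hT, MP.map_eq, Measure.prod_apply hT]
  have hset : ∀ x : {j // j = i} → ℝ, Prod.mk x ⁻¹' (e.symm ⁻¹' S)
      = Set.pi Set.univ
          (fun j : {j // ¬ j = i} => Iic (V i + x ⟨i, rfl⟩ - V (j : I))) := by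
    intro x
    have happ : ∀ (g : {j // ¬ j = i} → ℝ) (j : I),
        (e.symm (x, g)) j = if h : j = i then x ⟨j, h⟩ else g ⟨j, h⟩ := fun g j => rfl
    ext g
    simp only [Set.mem_preimage, hS, Set.mem_setOf_eq, Set.mem_pi, Set.mem_univ,
      forall_true_left, Set.mem_Iic, happ, dite_true]
    constructor
    · intro h j
      have h2 := h (j : I)
      rw [dif_neg j.2] at h2
      have h3 : (⟨(j : I), j.2⟩ : {j // ¬ j = i}) = j := rfl
      rw [h3] at h2
      linarith
    · intro h j
      by_cases hj : j = i
      · rw [dif_pos hj]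
        subst hj
        exact le_rfl
      · rw [dif_neg hj]
        have := h ⟨j, hj⟩
        linarith
  simp only [hset, Measure.pi_pi, gumbelMeasure_Iic]
  have hg : ∀ x : {j // j = i} → ℝ,
      (∏ j : {j // ¬ j = i},
        ENNReal.ofReal (Real.exp (-Real.exp (-(V i + x ⟨i, rfl⟩ - V (j : I))))))
      = ENNReal.ofReal (Real.exp (-(A * Real.exp (-(x ⟨i, rfl⟩))))) := by
    intro x
    rw [← ENNReal.ofReal_prod_of_nonneg (fun j _ => (Real.exp_pos _).le)]
    congr 1
    rw [← Real.exp_sum]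
    congr 1
    rw [Finset.sum_neg_distrib, hA, Finset.sum_mul]
    congr 1
    refine Finset.sum_congr rfl fun j _ => ?_
    rw [← Real.exp_add]
    ring_nf
  simp only [hg]
  refine (@lintegral_pi_eval {j // j = i} (Subtype.fintype fun j => j = i) gumbelMeasure _
    ⟨i, rfl⟩ (fun t => ENNReal.ofReal (Real.exp (-(A * Real.exp (-t))))) (by fun_prop)).trans ?_
  calc ∫⁻ t, ENNReal.ofReal (Real.exp (-(A * Real.exp (-t)))) ∂gumbelMeasure
      = ∫⁻ t, ENNReal.ofReal (Real.exp (-t) * Real.exp (-((1 + A) * Real.exp (-t)))) := by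
        rw [gumbelMeasure_def,
          lintegral_withDensity_eq_lintegral_mul _ (by fun_prop) (by fun_prop)]
        refine lintegral_congr fun t => ?_
        simp only [Pi.mul_apply]
        rw [← ENNReal.ofReal_mul (by positivity)]
        congr 1
        rw [mul_assoc, ← Real.exp_add]
        ring_nf
    _ = ENNReal.ofReal (Real.exp (V i) / ∑ j, Real.exp (V j)) := by
        rw [← ofReal_integral_eq_lintegral_ofReal (gumbel_integrable (1 + A) (by linarith))
          (Filter.Eventually.of_forall fun t => by positivity),
          gumbel_integral (1 + A) (by linarith)]
        congr 1
        have hsub : A = ∑ j ∈ Finset.univ.erase i, Real.exp (V j - V i) := by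
          rw [hA, ← Finset.sum_subtype (Finset.univ.erase i)
            (fun x => by simp [Finset.mem_erase, Ne]) (fun j => Real.exp (V j - V i))]
        have h1 : (1 : ℝ) + A = ∑ j, Real.exp (V j - V i) := by
          rw [hsub, ← Finset.add_sum_erase Finset.univ _ (Finset.mem_univ i)]
          simp
        rw [h1]
        have h2 : ∑ j, Real.exp (V j - V i) = (∑ j, Real.exp (V j)) / Real.exp (V i) := by
          simp_rw [Real.exp_sub, ← Finset.sum_div]
        rw [h2, inv_div]

/-- Multinomial logit choice probabilities: if the error terms `ξ i` are
independent standard Gumbel (CDF `exp (-exp (-x))`), then the probability that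
option `i` maximizes the utility `V j + ξ j` equals the softmax
`exp (V i) / ∑ j, exp (V j)`. -/
theorem gumbel_argmax_prob_eq_softmax
    {I : Type*} [Fintype I] [Nonempty I]
    {Ω : Type*} [MeasurableSpace Ω] (μ : Measure Ω) [IsProbabilityMeasure μ]
    (V : I → ℝ) (ξ : I → Ω → ℝ)
    (hmeas : ∀ i, Measurable (ξ i))
    (hindep : iIndepFun ξ μ)
    (hcdf : ∀ i x, μ {ω | ξ i ω ≤ x} = ENNReal.ofReal (Real.exp (-Real.exp (-x)))) :
    ∀ i, μ {ω | ∀ j, V j + ξ j ω ≤ V i + ξ i ω} =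
      ENNReal.ofReal (Real.exp (V i) / ∑ j, Real.exp (V j)) := by
  classical
  intro i
  have hν : ∀ j, μ.map (ξ j) = gumbelMeasure := by
    intro j
    haveI : IsProbabilityMeasure (μ.map (ξ j)) :=
      Measure.isProbabilityMeasure_map (hmeas j).aemeasurable
    refine Measure.ext_of_Iic (μ.map (ξ j)) gumbelMeasure fun a => ?_
    rw [Measure.map_apply (hmeas j) measurableSet_Iic, gumbelMeasure_Iic]
    exact hcdf j a
  have hFmeas : Measurable fun ω (j : I) => ξ j ω := measurable_pi_lambda _ hmeas
  have hmap : μ.map (fun ω (j : I) => ξ j ω) = Measure.pi (fun _ : I => gumbelMeasure) := by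
    refine (Measure.pi_eq fun s hs => ?_).symm
    rw [Measure.map_apply hFmeas (MeasurableSet.univ_pi hs)]
    have hpre : (fun ω (j : I) => ξ j ω) ⁻¹' (Set.pi Set.univ s)
        = ⋂ j ∈ (Finset.univ : Finset I), ξ j ⁻¹' s j := by
      ext ω
      simp [Set.mem_pi]
    rw [hpre, hindep.measure_inter_preimage_eq_mul Finset.univ (fun j _ => hs j)]
    exact Finset.prod_congr rfl fun j _ => by
      rw [← Measure.map_apply (hmeas j) (hs j), hν j]
  have hSmeas : MeasurableSet {f : I → ℝ | ∀ j, V j + f j ≤ V i + f i} := by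
    have h : {f : I → ℝ | ∀ j, V j + f j ≤ V i + f i}
        = ⋂ j, {f : I → ℝ | V j + f j ≤ V i + f i} := by ext f; simp
    rw [h]
    exact MeasurableSet.iInter fun j => measurableSet_le (by fun_prop) (by fun_prop)
  have hEev : {ω | ∀ j, V j + ξ j ω ≤ V i + ξ i ω}
      = (fun ω (j : I) => ξ j ω) ⁻¹' {f : I → ℝ | ∀ j, V j + f j ≤ V i + f i} := rfl
  rw [hEev, ← Measure.map_apply hFmeas hSmeas, hmap]
  exact pi_gumbel_event V i
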